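/- Let K be a finite field with q elements, A = K[e]/(e^n) with basis e_0,...,e_{n-1}, and define V ∼ W for subspaces V, W of A iff γV = W for some unit γ ∈ A^× (equivalently γ with nonzero constant term). Then each ∼-equivalence class of 2-dimensional subspaces containing e_0 but not e_{n-1} has cardinality at most q, and hence the number of such equivalence classes is at least (q^{n-2} - 1)/(q - 1) ≥ q^{n-3} (for n ≥ 4). -/

import Mathlib

namespace Stmt14Aux
open Polynomial

variable {K : Type*} [Field K] {n : ℕ}

theorem xpow_ne (K : Type*) [Field K] (n : ℕ) : (X ^ n : K[X]) ≠ 0 := pow_ne_zero _ X_ne_zero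

noncomputable def bas (K : Type*) [Field K] (n : ℕ) :
    Module.Basis (Fin n) K (AdjoinRoot (X ^ n : K[X])) :=
  ((AdjoinRoot.powerBasis (xpow_ne K n)).basis).reindex
    (finCongr (by rw [AdjoinRoot.powerBasis_dim, natDegree_X_pow]))

theorem bas_apply (i : Fin n) :
    bas K n i = AdjoinRoot.root (X ^ n : K[X]) ^ (i : ℕ) := by
  rw [bas, Module.Basis.reindex_apply, PowerBasis.basis_eq_pow, AdjoinRoot.powerBasis_gen]
  rfl

theorem root_pow_n : (AdjoinRoot.root (X ^ n : K[X])) ^ n = 0 := by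
  rw [← AdjoinRoot.mk_X, ← map_pow, AdjoinRoot.mk_self]

noncomputable def phi (K : Type*) [Field K] (n : ℕ) (hn : 0 < n) :
    AdjoinRoot (X ^ n : K[X]) →ₐ[K] K :=
  AdjoinRoot.liftAlgHom _ (Algebra.ofId K K) 0 (by simp [zero_pow hn.ne'])

theorem exists_eq_root_mul (hn : 0 < n) {a : AdjoinRoot (X ^ n : K[X])}
    (ha : phi K n hn a = 0) : ∃ b, a = AdjoinRoot.root (X ^ n : K[X]) * b := by
  obtain ⟨g, rfl⟩ := AdjoinRoot.mk_surjective a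
  rw [phi, AdjoinRoot.liftAlgHom_mk] at ha
  have h0 : g.coeff 0 = 0 := by
    rw [coeff_zero_eq_eval_zero, ← Polynomial.coe_aeval_eq_eval]; exact ha
  obtain ⟨h, rfl⟩ := Polynomial.X_dvd_iff.2 h0
  exact ⟨AdjoinRoot.mk _ h, by rw [map_mul, AdjoinRoot.mk_X]⟩

theorem isNilpotent_of_phi_eq_zero (hn : 0 < n) {a : AdjoinRoot (X ^ n : K[X])}
    (ha : phi K n hn a = 0) : IsNilpotent a := by
  obtain ⟨b, rfl⟩ := exists_eq_root_mul hn ha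
  exact ⟨n, by rw [mul_pow, root_pow_n, zero_mul]⟩

theorem phi_ne_zero_of_isUnit (hn : 0 < n) {a : AdjoinRoot (X ^ n : K[X])}
    (ha : IsUnit a) : phi K n hn a ≠ 0 := by
  obtain ⟨u, rfl⟩ := ha
  intro h0
  have h1 : phi K n hn (↑u * ↑u⁻¹) = 1 := by rw [Units.mul_inv]; exact map_one _
  rw [map_mul, h0, zero_mul] at h1
  exact zero_ne_one h1

noncomputable def mulUnit (K : Type*) [Field K] {R : Type*} [CommRing R] [Algebra K R]
    (γ : Rˣ) : R ≃ₗ[K] R :=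
  LinearEquiv.ofLinear (LinearMap.mulLeft K (γ : R)) (LinearMap.mulLeft K ((γ⁻¹ : Rˣ) : R))
    (by ext x; simp [Units.mul_inv_cancel_left])
    (by ext x; simp [Units.inv_mul_cancel_left])

theorem finrank_map_mulLeft {R : Type*} [CommRing R] [Algebra K R] (γ : Rˣ) (V : Submodule K R) :
    Module.finrank K (V.map (LinearMap.mulLeft K (γ : R))) = Module.finrank K V := by
  have h : (LinearMap.mulLeft K (γ : R)) = (mulUnit K γ : R ≃ₗ[K] R).toLinearMap := rfl
  rw [h]
  exact LinearEquiv.finrank_map_eq _ _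

theorem map_mulLeft_smul {R : Type*} [CommRing R] [Algebra K R] {a : K} (ha : a ≠ 0) (y : R)
    (V : Submodule K R) :
    V.map (LinearMap.mulLeft K (a • y)) = V.map (LinearMap.mulLeft K y) := by
  ext x
  simp only [Submodule.mem_map, LinearMap.mulLeft_apply]
  constructor
  · rintro ⟨v, hv, rfl⟩
    exact ⟨a • v, V.smul_mem a hv, by rw [smul_mul_assoc, mul_smul_comm]⟩
  · rintro ⟨v, hv, rfl⟩
    refine ⟨a⁻¹ • v, V.smul_mem _ hv, ?_⟩
    rw [smul_mul_assoc, mul_smul_comm, ← smul_assoc, smul_eq_mul, mul_inv_cancel₀ ha, one_smul]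

theorem map_map_mulLeft {R : Type*} [CommRing R] [Algebra K R] (γ δ : R) (V : Submodule K R) :
    (V.map (LinearMap.mulLeft K γ)).map (LinearMap.mulLeft K δ) =
      V.map (LinearMap.mulLeft K (δ * γ)) := by
  rw [LinearMap.mulLeft_mul, Submodule.map_comp]

theorem map_mulLeft_one {R : Type*} [CommRing R] [Algebra K R] (V : Submodule K R) :
    V.map (LinearMap.mulLeft K (1 : R)) = V := by
  rw [LinearMap.mulLeft_one, Submodule.map_id]

theorem card_le [Fintype K] (hn : 4 ≤ n)
    (V : {W : Submodule K (AdjoinRoot (X ^ n : K[X])) //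
      Module.finrank K ↥W = 2 ∧ 1 ∈ W ∧ AdjoinRoot.root (X ^ n : K[X]) ^ (n - 1) ∉ W}) :
    Nat.card {W : {W : Submodule K (AdjoinRoot (X ^ n : K[X])) //
      Module.finrank K ↥W = 2 ∧ 1 ∈ W ∧ AdjoinRoot.root (X ^ n : K[X]) ^ (n - 1) ∉ W} //
      ∃ γ : (AdjoinRoot (X ^ n : K[X]))ˣ,
        Submodule.map (LinearMap.mulLeft K (γ : AdjoinRoot (X ^ n : K[X]))) V.1 = W.1}
      ≤ Fintype.card K := by
  have hn0 : 0 < n := by omega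
  haveI : Module.Finite K (AdjoinRoot (X ^ n : K[X])) := Module.Finite.of_basis (bas K n)
  have hker : LinearMap.ker ((phi K n hn0).toLinearMap ∘ₗ V.1.subtype) ≠ ⊥ := by
    intro h
    have hinj : Function.Injective ((phi K n hn0).toLinearMap ∘ₗ V.1.subtype) :=
      LinearMap.ker_eq_bot.mp h
    have hle := LinearMap.finrank_le_finrank_of_injective hinj
    rw [V.2.1, Module.finrank_self] at hle
    omega
  obtain ⟨u₀, hu₀mem, hu₀ne⟩ := (Submodule.ne_bot_iff _).1 hker
  have huV : (u₀ : AdjoinRoot (X ^ n : K[X])) ∈ V.1 := u₀.2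
  have huφ : phi K n hn0 (u₀ : AdjoinRoot (X ^ n : K[X])) = 0 := by
    simpa [LinearMap.mem_ker] using hu₀mem
  have hune : (u₀ : AdjoinRoot (X ^ n : K[X])) ≠ 0 := fun h => hu₀ne (Subtype.ext h)
  set u : AdjoinRoot (X ^ n : K[X]) := (u₀ : AdjoinRoot (X ^ n : K[X])) with hu
  have h1V : (1 : AdjoinRoot (X ^ n : K[X])) ∈ V.1 := V.2.2.1
  have h1φ : phi K n hn0 (1 : AdjoinRoot (X ^ n : K[X])) = 1 := map_one _
  obtain ⟨b₀, hub⟩ := exists_eq_root_mul hn0 huφ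
  have hr1 : AdjoinRoot.root (X ^ n : K[X]) * AdjoinRoot.root (X ^ n : K[X]) ^ (n - 1) = 0 := by
    rw [← pow_succ']
    rw [show n - 1 + 1 = n from by omega, root_pow_n]
  have huroot : u * AdjoinRoot.root (X ^ n : K[X]) ^ (n - 1) = 0 := by
    rw [hub, mul_comm (AdjoinRoot.root _) b₀, mul_assoc, hr1, mul_zero]
  have hli : LinearIndependent K ![(1 : AdjoinRoot (X ^ n : K[X])), u] := by
    rw [LinearIndependent.pair_iff]
    intro s t hst
    have h1 : s = 0 := by
      have h2 := congrArg (phi K n hn0) hst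
      simpa [map_add, map_smul, huφ, h1φ] using h2
    subst h1
    rw [zero_smul, zero_add] at hst
    rcases smul_eq_zero.1 hst with h | h
    · exact ⟨rfl, h⟩
    · exact absurd h hune
  have hspan : Submodule.span K {(1 : AdjoinRoot (X ^ n : K[X])), u} = V.1 := by
    apply Submodule.eq_of_le_of_finrank_eq
    · rw [Submodule.span_le, Set.insert_subset_iff, Set.singleton_subset_iff]
      exact ⟨h1V, huV⟩
    · rw [V.2.1]
      have hrange : ({(1 : AdjoinRoot (X ^ n : K[X])), u} : Set _) = Set.range ![1, u] := by
        simp [Matrix.range_cons, Matrix.range_empty]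
        exact Set.pair_comm 1 u
      rw [hrange, finrank_span_eq_card hli, Fintype.card_fin]
  have hmu : ∀ c : K, IsUnit (1 + c • u) := by
    intro c
    apply IsNilpotent.isUnit_one_add
    apply isNilpotent_of_phi_eq_zero hn0
    rw [map_smul, huφ, smul_zero]
  have hmem : ∀ μ : (AdjoinRoot (X ^ n : K[X]))ˣ, (↑μ : AdjoinRoot (X ^ n : K[X])) ∈ V.1 →
      (↑μ : AdjoinRoot (X ^ n : K[X])) * AdjoinRoot.root (X ^ n : K[X]) ^ (n - 1) =
        AdjoinRoot.root (X ^ n : K[X]) ^ (n - 1) →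
      Module.finrank K ↥(V.1.map (LinearMap.mulLeft K ((μ⁻¹ : _ˣ) : AdjoinRoot (X ^ n : K[X])))) = 2 ∧
      1 ∈ V.1.map (LinearMap.mulLeft K ((μ⁻¹ : _ˣ) : AdjoinRoot (X ^ n : K[X]))) ∧
      AdjoinRoot.root (X ^ n : K[X]) ^ (n - 1) ∉
        V.1.map (LinearMap.mulLeft K ((μ⁻¹ : _ˣ) : AdjoinRoot (X ^ n : K[X]))) := by
    intro μ hμV hμe
    refine ⟨?_, ?_, ?_⟩
    · rw [finrank_map_mulLeft]; exact V.2.1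
    · exact ⟨↑μ, hμV, by simp [LinearMap.mulLeft_apply]⟩
    · rintro ⟨v, hv, hv1⟩
      apply V.2.2.2
      have hveq : v = (↑μ : AdjoinRoot (X ^ n : K[X])) * AdjoinRoot.root (X ^ n : K[X]) ^ (n - 1) := by
        have h3 := congrArg (fun z => (↑μ : AdjoinRoot (X ^ n : K[X])) * z) hv1
        simpa [LinearMap.mulLeft_apply, Units.mul_inv_cancel_left] using h3
      rw [hveq, hμe] at hv
      exact hv
  let g : K → {W : {W : Submodule K (AdjoinRoot (X ^ n : K[X])) //
      Module.finrank K ↥W = 2 ∧ 1 ∈ W ∧ AdjoinRoot.root (X ^ n : K[X]) ^ (n - 1) ∉ W} //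
      ∃ γ : (AdjoinRoot (X ^ n : K[X]))ˣ,
        Submodule.map (LinearMap.mulLeft K (γ : AdjoinRoot (X ^ n : K[X]))) V.1 = W.1} := fun c =>
    ⟨⟨V.1.map (LinearMap.mulLeft K (((hmu c).unit⁻¹ : _ˣ) : AdjoinRoot (X ^ n : K[X]))),
      hmem (hmu c).unit (by rw [IsUnit.unit_spec]; exact V.1.add_mem h1V (V.1.smul_mem c huV))
        (by rw [IsUnit.unit_spec, add_mul, one_mul, smul_mul_assoc, huroot, smul_zero, add_zero])⟩,
      ⟨(hmu c).unit⁻¹, rfl⟩⟩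
  have hsurj : Function.Surjective g := by
    rintro ⟨W, γ, hγ⟩
    have h1W : (1 : AdjoinRoot (X ^ n : K[X])) ∈ W.1 := W.2.2.1
    rw [← hγ] at h1W
    obtain ⟨v, hvV, hv1⟩ := h1W
    rw [LinearMap.mulLeft_apply] at hv1
    have hδ : v = ((γ⁻¹ : _ˣ) : AdjoinRoot (X ^ n : K[X])) :=
      (Units.inv_eq_of_mul_eq_one_right hv1).symm
    obtain ⟨a, bb, hab⟩ := Submodule.mem_span_pair.1 (by rw [hspan]; exact hvV)
    have haφ : phi K n hn0 v = a := by
      rw [← hab, map_add, map_smul, map_smul, h1φ, huφ, smul_zero, add_zero, smul_eq_mul, mul_one]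
    have ha : a ≠ 0 := by
      have h4 : phi K n hn0 v ≠ 0 :=
        phi_ne_zero_of_isUnit hn0 (by rw [hδ]; exact (γ⁻¹).isUnit)
      rwa [haφ] at h4
    refine ⟨a⁻¹ * bb, ?_⟩
    apply Subtype.ext; apply Subtype.ext
    show V.1.map (LinearMap.mulLeft K (((hmu (a⁻¹ * bb)).unit⁻¹ : _ˣ) : AdjoinRoot (X ^ n : K[X]))) = W.1
    have hkey : ((hmu (a⁻¹ * bb)).unit : AdjoinRoot (X ^ n : K[X])) * (a • (↑γ : AdjoinRoot (X ^ n : K[X]))) = 1 := by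
      rw [IsUnit.unit_spec]
      have hv' : (1 : AdjoinRoot (X ^ n : K[X])) + (a⁻¹ * bb) • u = a⁻¹ • v := by
        rw [← hab, smul_add, smul_smul, inv_mul_cancel₀ ha, one_smul, smul_smul]
      rw [hv', hδ, smul_mul_assoc, mul_smul_comm, smul_smul, inv_mul_cancel₀ ha, one_smul,
        Units.inv_mul]
    have hinv : (((hmu (a⁻¹ * bb)).unit⁻¹ : _ˣ) : AdjoinRoot (X ^ n : K[X]))
        = a • (↑γ : AdjoinRoot (X ^ n : K[X])) :=
      Units.inv_eq_of_mul_eq_one_right hkey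
    rw [hinv, map_mulLeft_smul ha, hγ]
  calc Nat.card _ ≤ Nat.card K := Nat.card_le_card_of_surjective g hsurj
    _ = Fintype.card K := Nat.card_eq_fintype_card

end Stmt14Aux


namespace Stmt14AuxB
open Polynomial

variable {K : Type*} [Field K] {n : ℕ}

noncomputable def bas (K : Type*) [Field K] (n : ℕ) :
    Module.Basis (Fin n) K (AdjoinRoot (X ^ n : K[X])) :=
  ((AdjoinRoot.powerBasis (pow_ne_zero n (X_ne_zero : (X : K[X]) ≠ 0))).basis).reindex
    (finCongr (by rw [AdjoinRoot.powerBasis_dim, natDegree_X_pow]))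

theorem bas_apply (i : Fin n) :
    bas K n i = AdjoinRoot.root (X ^ n : K[X]) ^ (i : ℕ) := by
  rw [bas, Module.Basis.reindex_apply, PowerBasis.basis_eq_pow, AdjoinRoot.powerBasis_gen]
  rfl

def coordFun (K : Type*) [Field K] (n : ℕ)
    (x : (Σ j : Fin (n - 2), (Fin (j : ℕ) → K)) × K) : Fin n → K := fun i =>
  if (i : ℕ) = n - 2 - (x.1.1 : ℕ) then 1
  else if (i : ℕ) = n - 1 then x.2
  else if h : n - 2 - (x.1.1 : ℕ) < (i : ℕ) ∧ (i : ℕ) ≤ n - 2 then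
    x.1.2 ⟨(i : ℕ) - (n - 2 - (x.1.1 : ℕ)) - 1, by have := x.1.1.isLt; omega⟩
  else 0

theorem coordFun_eq_zero (hn : 4 ≤ n) (x : (Σ j : Fin (n - 2), (Fin (j : ℕ) → K)) × K)
    {i : Fin n} (h : (i : ℕ) < n - 2 - (x.1.1 : ℕ)) : coordFun K n x i = 0 := by
  have hj := x.1.1.isLt
  unfold coordFun
  rw [if_neg (by omega), if_neg (by omega), dif_neg (by omega)]

theorem coordFun_at_k (hn : 4 ≤ n) (x : (Σ j : Fin (n - 2), (Fin (j : ℕ) → K)) × K)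
    {i : Fin n} (h : (i : ℕ) = n - 2 - (x.1.1 : ℕ)) : coordFun K n x i = 1 := by
  unfold coordFun
  rw [if_pos h]

theorem coordFun_at_last (hn : 4 ≤ n) (x : (Σ j : Fin (n - 2), (Fin (j : ℕ) → K)) × K)
    {i : Fin n} (h : (i : ℕ) = n - 1) : coordFun K n x i = x.2 := by
  have hj := x.1.1.isLt
  unfold coordFun
  rw [if_neg (by omega), if_pos h]

theorem coordFun_at_mid (hn : 4 ≤ n) (x : (Σ j : Fin (n - 2), (Fin (j : ℕ) → K)) × K)
    {i : Fin n} {t : ℕ} (ht : t < (x.1.1 : ℕ))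
    (h : (i : ℕ) = n - 2 - (x.1.1 : ℕ) + 1 + t) : coordFun K n x i = x.1.2 ⟨t, ht⟩ := by
  have hj := x.1.1.isLt
  unfold coordFun
  rw [if_neg (by omega), if_neg (by omega), dif_pos (by omega)]
  exact congrArg x.1.2 (Fin.mk_eq_mk.mpr (by omega))


set_option maxHeartbeats 1000000 in
theorem card_X_lower {K : Type*} [Field K] [Fintype K] {n : ℕ} (hn : 4 ≤ n) :
    (∑ i ∈ Finset.range (n - 2), Fintype.card K ^ i) * Fintype.card K ≤
      Nat.card {W : Submodule K (AdjoinRoot (X ^ n : K[X])) //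
        Module.finrank K ↥W = 2 ∧ 1 ∈ W ∧ AdjoinRoot.root (X ^ n : K[X]) ^ (n - 1) ∉ W} := by
  classical
  have hn0 : 0 < n := by omega
  set Φ := (bas K n).equivFun with hPhidef
  haveI : Finite (AdjoinRoot (X ^ n : K[X])) := Finite.of_equiv _ Φ.toEquiv.symm
  haveI : Finite (Submodule K (AdjoinRoot (X ^ n : K[X]))) :=
    Finite.of_injective (fun p => (p : Set (AdjoinRoot (X ^ n : K[X])))) SetLike.coe_injective
  have hPhib : ∀ (m : ℕ) (hm : m < n) (i : Fin n),
      Φ (AdjoinRoot.root (X ^ n : K[X]) ^ m) i = if (i : ℕ) = m then 1 else 0 := by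
    intro m hm i
    have h1 : AdjoinRoot.root (X ^ n : K[X]) ^ m = bas K n ⟨m, hm⟩ :=
      (bas_apply (K := K) (n := n) ⟨m, hm⟩).symm
    rw [h1, hPhidef, Module.Basis.equivFun_self]
    by_cases h : (i : ℕ) = m
    · rw [if_pos (Fin.ext h.symm), if_pos h]
    · rw [if_neg (fun hh => h (congrArg Fin.val hh).symm), if_neg h]
  have hPhi1 : ∀ i : Fin n, Φ (1 : AdjoinRoot (X ^ n : K[X])) i = if (i : ℕ) = 0 then 1 else 0 := by
    intro i
    have := hPhib 0 hn0 i
    rwa [pow_zero] at this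
  set w : ((Σ j : Fin (n - 2), (Fin (j : ℕ) → K)) × K) → AdjoinRoot (X ^ n : K[X]) :=
    fun x => Φ.symm (coordFun K n x) with hwdef
  have hPhiw : ∀ x, Φ (w x) = coordFun K n x := fun x => Φ.apply_symm_apply _
  have hcoord : ∀ (x) (a b : K) (i : Fin n), Φ (a • 1 + b • w x) i
      = a * (if (i : ℕ) = 0 then 1 else 0) + b * coordFun K n x i := by
    intro x a b i
    rw [map_add, map_smul, map_smul, Pi.add_apply, Pi.smul_apply, Pi.smul_apply, hPhi1, hPhiw,
      smul_eq_mul, smul_eq_mul]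
  have hX : ∀ x, Module.finrank K ↥(Submodule.span K {(1 : AdjoinRoot (X ^ n : K[X])), w x}) = 2
      ∧ (1 : AdjoinRoot (X ^ n : K[X])) ∈ Submodule.span K {(1 : AdjoinRoot (X ^ n : K[X])), w x}
      ∧ AdjoinRoot.root (X ^ n : K[X]) ^ (n - 1) ∉
          Submodule.span K {(1 : AdjoinRoot (X ^ n : K[X])), w x} := by
    intro x
    have hjlt := x.1.1.isLt
    have hli : LinearIndependent K ![(1 : AdjoinRoot (X ^ n : K[X])), w x] := by
      rw [LinearIndependent.pair_iff]
      intro s t hst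
      have e0 : Φ (s • 1 + t • w x) ⟨0, hn0⟩ = 0 := by rw [hst, map_zero]; rfl
      rw [hcoord, coordFun_eq_zero hn x (show (0 : ℕ) < n - 2 - (x.1.1 : ℕ) by omega),
        if_pos rfl, mul_zero, add_zero, mul_one] at e0
      have ek : Φ (s • 1 + t • w x) ⟨n - 2 - (x.1.1 : ℕ), by omega⟩ = 0 := by
        rw [hst, map_zero]; rfl
      rw [hcoord, coordFun_at_k hn x rfl,
        if_neg (show ¬(n - 2 - (x.1.1 : ℕ) = 0) by omega), mul_zero, zero_add, mul_one] at ek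
      exact ⟨e0, ek⟩
    refine ⟨?_, Submodule.subset_span (Set.mem_insert _ _), ?_⟩
    · have hrange : ({(1 : AdjoinRoot (X ^ n : K[X])), w x} : Set _) = Set.range ![1, w x] := by
        simp [Matrix.range_cons, Matrix.range_empty]
        exact Set.pair_comm 1 (w x)
      rw [hrange, finrank_span_eq_card hli, Fintype.card_fin]
    · intro hmem'
      obtain ⟨a, b, hab⟩ := Submodule.mem_span_pair.1 hmem'
      have e0 : Φ (a • 1 + b • w x) ⟨0, hn0⟩
          = Φ (AdjoinRoot.root (X ^ n : K[X]) ^ (n - 1)) ⟨0, hn0⟩ := by rw [hab]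
      rw [hcoord, hPhib (n - 1) (by omega), coordFun_eq_zero hn x
          (show (0 : ℕ) < n - 2 - (x.1.1 : ℕ) by omega),
        if_pos rfl, if_neg (show ¬(0 : ℕ) = n - 1 by omega), mul_zero, add_zero, mul_one] at e0
      have ek : Φ (a • 1 + b • w x) ⟨n - 2 - (x.1.1 : ℕ), by omega⟩
          = Φ (AdjoinRoot.root (X ^ n : K[X]) ^ (n - 1)) ⟨n - 2 - (x.1.1 : ℕ), by omega⟩ := by
        rw [hab]
      rw [hcoord, hPhib (n - 1) (by omega), coordFun_at_k hn x rfl,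
        if_neg (show ¬(n - 2 - (x.1.1 : ℕ) = 0) by omega),
        if_neg (show ¬(n - 2 - (x.1.1 : ℕ) = n - 1) by omega),
        mul_zero, zero_add, mul_one] at ek
      rw [e0, ek, zero_smul, zero_smul, add_zero] at hab
      have h12 := hPhib (n - 1) (by omega) ⟨n - 1, by omega⟩
      rw [← hab, map_zero, if_pos rfl] at h12
      exact zero_ne_one (h12 : (0 : Fin n → K) _ = 1)
  let m : ((Σ j : Fin (n - 2), (Fin (j : ℕ) → K)) × K) →
      {W : Submodule K (AdjoinRoot (X ^ n : K[X])) //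
        Module.finrank K ↥W = 2 ∧ 1 ∈ W ∧ AdjoinRoot.root (X ^ n : K[X]) ^ (n - 1) ∉ W} :=
    fun x => ⟨Submodule.span K {1, w x}, hX x⟩
  have hminj : Function.Injective m := by
    rintro ⟨⟨j, v⟩, c⟩ ⟨⟨j', v'⟩, c'⟩ hmx
    have hjlt := j.isLt
    have hj'lt := j'.isLt
    have hsp : Submodule.span K {(1 : AdjoinRoot (X ^ n : K[X])), w ⟨⟨j, v⟩, c⟩}
        = Submodule.span K {(1 : AdjoinRoot (X ^ n : K[X])), w ⟨⟨j', v'⟩, c'⟩} :=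
      congrArg Subtype.val hmx
    have hw' : w ⟨⟨j', v'⟩, c'⟩ ∈
        Submodule.span K {(1 : AdjoinRoot (X ^ n : K[X])), w ⟨⟨j, v⟩, c⟩} := by
      rw [hsp]
      exact Submodule.subset_span (Set.mem_insert_of_mem _ rfl)
    obtain ⟨a, b, hab⟩ := Submodule.mem_span_pair.1 hw'
    have heval : ∀ i : Fin n, (a * (if (i : ℕ) = 0 then 1 else 0)
        + b * coordFun K n ⟨⟨j, v⟩, c⟩ i) = coordFun K n ⟨⟨j', v'⟩, c'⟩ i := by
      intro i
      have h5 : Φ (a • 1 + b • w ⟨⟨j, v⟩, c⟩) i = Φ (w ⟨⟨j', v'⟩, c'⟩) i := by rw [hab]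
      rw [hcoord, hPhiw] at h5
      exact h5
    have ha0 : a = 0 := by
      have h5 := heval ⟨0, hn0⟩
      rw [coordFun_eq_zero hn ⟨⟨j, v⟩, c⟩ (show (0 : ℕ) < n - 2 - (j : ℕ) by omega),
        coordFun_eq_zero hn ⟨⟨j', v'⟩, c'⟩ (show (0 : ℕ) < n - 2 - (j' : ℕ) by omega),
        if_pos rfl, mul_zero, add_zero, mul_one] at h5
      exact h5
    have hkk : n - 2 - (j : ℕ) = n - 2 - (j' : ℕ) := by
      by_contra hne
      rcases Nat.lt_or_ge (n - 2 - (j : ℕ)) (n - 2 - (j' : ℕ)) with hlt | hge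
      · have h6 := heval ⟨n - 2 - (j : ℕ), by omega⟩
        rw [ha0, coordFun_at_k hn ⟨⟨j, v⟩, c⟩ rfl,
          coordFun_eq_zero hn ⟨⟨j', v'⟩, c'⟩ (show n - 2 - (j : ℕ) < n - 2 - (j' : ℕ) from hlt),
          zero_mul, zero_add, mul_one] at h6
        have h7 := heval ⟨n - 2 - (j' : ℕ), by omega⟩
        rw [ha0, h6, coordFun_at_k hn ⟨⟨j', v'⟩, c'⟩ rfl, zero_mul, zero_mul, zero_add] at h7
        exact zero_ne_one h7
      · have hlt' : n - 2 - (j' : ℕ) < n - 2 - (j : ℕ) := by omega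
        have h8 := heval ⟨n - 2 - (j' : ℕ), by omega⟩
        rw [ha0, coordFun_eq_zero hn ⟨⟨j, v⟩, c⟩ hlt',
          coordFun_at_k hn ⟨⟨j', v'⟩, c'⟩ rfl, zero_mul, zero_add, mul_zero] at h8
        exact one_ne_zero h8.symm
    obtain rfl : j = j' := Fin.ext (by omega)
    have hb1 : b = 1 := by
      have h9 := heval ⟨n - 2 - (j : ℕ), by omega⟩
      rw [ha0, coordFun_at_k hn ⟨⟨j, v⟩, c⟩ rfl, coordFun_at_k hn ⟨⟨j, v'⟩, c'⟩ rfl, zero_mul, zero_add, mul_one] at h9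
      exact h9
    have hvv : v = v' := by
      funext t
      have h10 := heval ⟨n - 2 - (j : ℕ) + 1 + (t : ℕ), by omega⟩
      rw [ha0, hb1, coordFun_at_mid hn ⟨⟨j, v⟩, c⟩ t.isLt rfl, coordFun_at_mid hn ⟨⟨j, v'⟩, c'⟩ t.isLt rfl,
        if_neg (show ¬(n - 2 - (j : ℕ) + 1 + (t : ℕ) = 0) by omega),
        zero_mul, zero_add, one_mul] at h10
      simpa [Fin.eta] using h10
    have hcc : c = c' := by
      have h11 := heval ⟨n - 1, by omega⟩
      rw [ha0, hb1, coordFun_at_last hn ⟨⟨j, v⟩, c⟩ rfl, coordFun_at_last hn ⟨⟨j, v'⟩, c'⟩ rfl,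
        if_neg (show ¬(n - 1 = 0) by omega), zero_mul, zero_add, one_mul] at h11
      exact h11
    subst hvv; subst hcc; rfl
  have hle := Nat.card_le_card_of_injective m hminj
  have hcardI : Nat.card ((Σ j : Fin (n - 2), (Fin (j : ℕ) → K)) × K)
      = (∑ i ∈ Finset.range (n - 2), Fintype.card K ^ i) * Fintype.card K := by
    rw [Nat.card_eq_fintype_card, Fintype.card_prod, Fintype.card_sigma]
    congr 1
    rw [← Fin.sum_univ_eq_sum_range (fun i => Fintype.card K ^ i) (n - 2)]
    exact Finset.sum_congr rfl (fun j _ => by rw [Fintype.card_fun, Fintype.card_fin])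
  rwa [hcardI] at hle

end Stmt14AuxB


theorem Stmt14Geom (q : ℕ) (hq : 1 ≤ q) (m : ℕ) :
    (q - 1) * ∑ i ∈ Finset.range m, q ^ i = q ^ m - 1 := by
  induction m with
  | zero => simp
  | succ m ih =>
    rw [Finset.sum_range_succ, Nat.mul_add, ih]
    have h1 : 1 ≤ q ^ m := Nat.one_le_pow _ _ (by omega)
    have h2 : q ^ (m + 1) = q * q ^ m := by rw [pow_succ, mul_comm]
    have h3 : (q - 1) * q ^ m = q * q ^ m - q ^ m := by rw [Nat.sub_mul, one_mul]
    have h4 : q ^ m ≤ q * q ^ m := Nat.le_mul_of_pos_left _ (by omega)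
    omega

open Polynomial in
/-- for a finite field `K` with `q` elements, `A = K[e]/(e^n)`, and the
equivalence `V ∼ W ⟺ γV = W` for some unit `γ ∈ A^×` on the set `X` of 2-dimensional
subspaces of `A` containing `1` but not `e^(n-1)`: every equivalence class has at most
`q` elements, and the number of classes is at least `(q^(n-2) - 1)/(q - 1) ≥ q^(n-3)`. -/
theorem stmt_14 (K : Type*) [Field K] [Fintype K] (q : ℕ) (hq : Fintype.card K = q)
    (n : ℕ) (hn : 4 ≤ n)
    (e : AdjoinRoot (X ^ n : K[X])) (he : e = AdjoinRoot.root (X ^ n : K[X]))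
    (r : {W : Submodule K (AdjoinRoot (X ^ n : K[X])) //
        Module.finrank K W = 2 ∧ (1 : AdjoinRoot (X ^ n : K[X])) ∈ W ∧ e ^ (n - 1) ∉ W} →
      {W : Submodule K (AdjoinRoot (X ^ n : K[X])) //
        Module.finrank K W = 2 ∧ (1 : AdjoinRoot (X ^ n : K[X])) ∈ W ∧ e ^ (n - 1) ∉ W} → Prop)
    (hr : ∀ V W, r V W ↔ ∃ γ : (AdjoinRoot (X ^ n : K[X]))ˣ,
      Submodule.map (LinearMap.mulLeft K (γ : AdjoinRoot (X ^ n : K[X]))) V.1 = W.1) :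
    (∀ V, Nat.card {W // r V W} ≤ q) ∧
      (q ^ (n - 2) - 1) / (q - 1) ≤ Nat.card (Quot r) ∧
      q ^ (n - 3) ≤ (q ^ (n - 2) - 1) / (q - 1) := by
  subst he
  classical
  have hn0 : 0 < n := by omega
  have hq2 : 2 ≤ q := by rw [← hq]; exact Fintype.one_lt_card
  set S := ∑ i ∈ Finset.range (n - 2), q ^ i with hS
  have hgeom : (q - 1) * S = q ^ (n - 2) - 1 := Stmt14Geom q (by omega) (n - 2)
  have hdiv : (q ^ (n - 2) - 1) / (q - 1) = S :=
    Nat.div_eq_of_eq_mul_left (by omega) (by rw [← hgeom, mul_comm])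
  have part1 : ∀ V, Nat.card {W // r V W} ≤ q := by
    intro V
    have hequiv := Equiv.subtypeEquivRight (hr V)
    rw [Nat.card_congr hequiv, ← hq]
    exact Stmt14Aux.card_le hn V
  refine ⟨part1, ?_, ?_⟩
  · -- number of classes
    haveI : Finite (AdjoinRoot (X ^ n : K[X])) :=
      Finite.of_equiv _ (Stmt14AuxB.bas K n).equivFun.toEquiv.symm
    haveI : Finite (Submodule K (AdjoinRoot (X ^ n : K[X]))) :=
      Finite.of_injective (fun p => (p : Set (AdjoinRoot (X ^ n : K[X])))) SetLike.coe_injective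
    haveI : Fintype {W : Submodule K (AdjoinRoot (X ^ n : K[X])) //
        Module.finrank K W = 2 ∧ (1 : AdjoinRoot (X ^ n : K[X])) ∈ W ∧
          AdjoinRoot.root (X ^ n : K[X]) ^ (n - 1) ∉ W} := Fintype.ofFinite _
    haveI : Finite (Quot r) := Finite.of_surjective (Quot.mk r) Quot.mk_surjective
    haveI : Fintype (Quot r) := Fintype.ofFinite _
    have requiv : Equivalence r := by
      refine ⟨fun V => ?_, fun {V W} h => ?_, fun {U V W} h1 h2 => ?_⟩
      · rw [hr]
        exact ⟨1, by rw [Units.val_one, Stmt14Aux.map_mulLeft_one]⟩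
      · rw [hr] at h ⊢
        obtain ⟨γ, hγ⟩ := h
        refine ⟨γ⁻¹, ?_⟩
        rw [← hγ, Stmt14Aux.map_map_mulLeft, Units.inv_mul, Stmt14Aux.map_mulLeft_one]
      · rw [hr] at h1 h2 ⊢
        obtain ⟨γ₁, hγ₁⟩ := h1
        obtain ⟨γ₂, hγ₂⟩ := h2
        refine ⟨γ₂ * γ₁, ?_⟩
        rw [← hγ₂, ← hγ₁, Stmt14Aux.map_map_mulLeft, Units.val_mul]
    have hfib : ∀ b ∈ Finset.univ.image (Quot.mk r),
        (Finset.univ.filter (fun x => Quot.mk r x = b)).card ≤ q := by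
      intro b _
      obtain ⟨V, rfl⟩ := b.exists_rep
      have hc : (Finset.univ.filter (fun x => Quot.mk r x = Quot.mk r V)).card
          = Fintype.card {x // Quot.mk r x = Quot.mk r V} := (Fintype.card_subtype _).symm
      rw [hc, ← Nat.card_eq_fintype_card]
      have he2 : {x // Quot.mk r x = Quot.mk r V} ≃ {W // r V W} :=
        Equiv.subtypeEquivRight (fun x => by
          rw [Quot.eq]
          exact ⟨fun h => requiv.symm ((requiv.eqvGen_iff).1 h),
            fun h => (requiv.eqvGen_iff).2 (requiv.symm h)⟩)
      rw [Nat.card_congr he2]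
      exact part1 V
    have hXle := Finset.card_le_mul_card_image (Finset.univ :
      Finset {W : Submodule K (AdjoinRoot (X ^ n : K[X])) //
        Module.finrank K W = 2 ∧ (1 : AdjoinRoot (X ^ n : K[X])) ∈ W ∧
          AdjoinRoot.root (X ^ n : K[X]) ^ (n - 1) ∉ W}) q hfib
    have himg : (Finset.univ.image (Quot.mk r)).card ≤ Fintype.card (Quot r) :=
      Finset.card_le_univ _
    have hXcard : Fintype.card {W : Submodule K (AdjoinRoot (X ^ n : K[X])) //
        Module.finrank K W = 2 ∧ (1 : AdjoinRoot (X ^ n : K[X])) ∈ W ∧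
          AdjoinRoot.root (X ^ n : K[X]) ^ (n - 1) ∉ W} ≤ q * Fintype.card (Quot r) := by
      rw [← Finset.card_univ]
      exact le_trans hXle (Nat.mul_le_mul_left q himg)
    have hlow := Stmt14AuxB.card_X_lower (K := K) hn
    rw [hq, Nat.card_eq_fintype_card] at hlow
    have hcomb : S * q ≤ q * Fintype.card (Quot r) := le_trans hlow hXcard
    rw [mul_comm q] at hcomb
    have h2 : S ≤ Fintype.card (Quot r) := Nat.le_of_mul_le_mul_right hcomb (by omega)
    rw [hdiv, Nat.card_eq_fintype_card]
    exact h2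
  · rw [hdiv]
    exact Finset.single_le_sum (f := fun i => q ^ i) (fun i _ => Nat.zero_le _)
      (Finset.mem_range.2 (by omega))
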